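/- Let n ≥ 1, let P₀ ∈ M_n be an edge probability distribution, let c > 0, and let C_c = {Q ∈ M_n | ∀ u,v, Q[u,v] ≥ c}. Let (e_i)_{i∈ℕ} be a sequence of independent random variables on Fin n × Fin n, each with law P₀. Then sup_{Q ∈ C_c} |(1/x)·(−∑_{i=1}^{x} log₂ Q[e_i] + ∑_{u,v} Q[u,v]·log₂ Q[u,v]) − H(P₀,Q)| converges in probability to 0 as x → ∞, where H(P₀,Q) = −∑_{u,v} P₀[u,v]·log₂ Q[u,v]. -/

import Mathlib

open MeasureTheory Filter Topology

/-- `Q` is an edge probability distribution on `n` nodes. -/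
def IsEdgeDist {n : ℕ} (Q : Fin n × Fin n → ℝ) : Prop :=
  (∀ a, 0 ≤ Q a ∧ Q a ≤ 1) ∧ ∑ a : Fin n × Fin n, Q a = 1

/-- The cross entropy `H(P,Q) = −∑_{u,v} P[u,v]·log₂ Q[u,v]`. -/
noncomputable def crossEnt {n : ℕ} (P Q : Fin n × Fin n → ℝ) : ℝ :=
  -∑ a : Fin n × Fin n, P a * Real.logb 2 (Q a)

/-- Group a sum over samples by the value taken. -/
lemma sum_comp_eq {n x : ℕ} (v : ℕ → Fin n × Fin n) (f : Fin n × Fin n → ℝ) :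
    ∑ i ∈ Finset.range x, f (v i)
      = ∑ a : Fin n × Fin n, (∑ i ∈ Finset.range x, (if v i = a then (1:ℝ) else 0)) * f a := by
  have h1 : ∀ i, f (v i) = ∑ a : Fin n × Fin n, (if v i = a then f a else 0) := by
    intro i
    simp [Finset.sum_ite_eq]
  simp_rw [h1]
  rw [Finset.sum_comm]
  congr 1
  ext a
  rw [Finset.sum_mul]
  congr 1
  ext i
  by_cases h : v i = a <;> simp [h]

/-- The key deterministic bound: the quantity inside the sup is uniformly (in `Q`)
bounded by a multiple of the total-variation-type distance of empirical frequencies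
to `P₀`, plus an `O(1/x)` term. -/
lemma key_bound {n : ℕ} (P₀ Q : Fin n × Fin n → ℝ)
    (c : ℝ) (hc : 0 < c) (hc1 : c ≤ 1)
    (hQ : IsEdgeDist Q) (hQc : ∀ a, c ≤ Q a) (x : ℕ) (v : ℕ → Fin n × Fin n) :
    |(1 / (x : ℝ)) * ((-∑ i ∈ Finset.range x, Real.logb 2 (Q (v i)))
        + ∑ a : Fin n × Fin n, Q a * Real.logb 2 (Q a)) - crossEnt P₀ Q|
      ≤ (∑ a : Fin n × Fin n,
            |(x:ℝ)⁻¹ * (∑ i ∈ Finset.range x, (if v i = a then (1:ℝ) else 0)) - P₀ a|)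
          * |Real.logb 2 c|
        + (x:ℝ)⁻¹ * ((Fintype.card (Fin n × Fin n) : ℝ) * |Real.logb 2 c|) := by
  set L : ℝ := |Real.logb 2 c| with hL
  have hb : (1:ℝ) < 2 := one_lt_two
  have hlogc : Real.logb 2 c ≤ 0 := Real.logb_nonpos hb hc.le hc1
  have hLc : L = -Real.logb 2 c := abs_of_nonpos hlogc
  have hg : ∀ a, |Real.logb 2 (Q a)| ≤ L := by
    intro a
    have h1 : Real.logb 2 (Q a) ≤ 0 := Real.logb_nonpos hb (hc.le.trans (hQc a)) (hQ.1 a).2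
    have h2 : Real.logb 2 c ≤ Real.logb 2 (Q a) :=
      (Real.logb_le_logb hb hc (hc.trans_le (hQc a))).2 (hQc a)
    rw [abs_of_nonpos h1, hLc]
    linarith
  set g : Fin n × Fin n → ℝ := fun a => Real.logb 2 (Q a) with hgdef
  set N : Fin n × Fin n → ℝ := fun a => ∑ i ∈ Finset.range x, (if v i = a then (1:ℝ) else 0)
    with hN
  have hrw : (1 / (x : ℝ)) * ((-∑ i ∈ Finset.range x, Real.logb 2 (Q (v i)))
        + ∑ a : Fin n × Fin n, Q a * Real.logb 2 (Q a)) - crossEnt P₀ Q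
      = (∑ a : Fin n × Fin n, (P₀ a - (x:ℝ)⁻¹ * N a) * g a)
        + (x:ℝ)⁻¹ * (∑ a : Fin n × Fin n, Q a * g a) := by
    rw [sum_comp_eq v (fun a => Real.logb 2 (Q a))]
    have e1 : ∑ a : Fin n × Fin n, (P₀ a - (x:ℝ)⁻¹ * N a) * g a
        = (∑ a : Fin n × Fin n, P₀ a * g a) - (x:ℝ)⁻¹ * ∑ a : Fin n × Fin n, N a * g a := by
      simp only [sub_mul, Finset.sum_sub_distrib, mul_assoc, ← Finset.mul_sum]
    rw [e1]
    simp only [crossEnt, hgdef, hN, one_div]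
    ring
  rw [hrw]
  refine (abs_add_le _ _).trans (add_le_add ?_ ?_)
  · calc |∑ a : Fin n × Fin n, (P₀ a - (x:ℝ)⁻¹ * N a) * g a|
        ≤ ∑ a : Fin n × Fin n, |(P₀ a - (x:ℝ)⁻¹ * N a) * g a| :=
          Finset.abs_sum_le_sum_abs _ _
      _ ≤ ∑ a : Fin n × Fin n, |(x:ℝ)⁻¹ * N a - P₀ a| * L := by
          refine Finset.sum_le_sum fun a _ => ?_
          rw [abs_mul, abs_sub_comm]
          exact mul_le_mul_of_nonneg_left (hg a) (abs_nonneg _)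
      _ = (∑ a : Fin n × Fin n, |(x:ℝ)⁻¹ * N a - P₀ a|) * L := by rw [Finset.sum_mul]
  · rw [abs_mul, abs_of_nonneg (inv_nonneg.2 (Nat.cast_nonneg x))]
    refine mul_le_mul_of_nonneg_left ?_ (inv_nonneg.2 (Nat.cast_nonneg x))
    calc |∑ a : Fin n × Fin n, Q a * g a|
        ≤ ∑ a : Fin n × Fin n, |Q a * g a| := Finset.abs_sum_le_sum_abs _ _
      _ ≤ ∑ _a : Fin n × Fin n, L := by
          refine Finset.sum_le_sum fun a _ => ?_
          rw [abs_mul]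
          calc |Q a| * |g a| ≤ 1 * L := by
                refine mul_le_mul ?_ (hg a) (abs_nonneg _) zero_le_one
                rw [abs_of_nonneg (hc.le.trans (hQc a))]
                exact (hQ.1 a).2
            _ = L := one_mul L
      _ = (Fintype.card (Fin n × Fin n) : ℝ) * L := by
          rw [Finset.sum_const, Finset.card_univ, nsmul_eq_mul]

/-- Strong law of large numbers for the empirical frequency of each edge value. -/
lemma freq_tendsto {n : ℕ}
    (P₀ : Fin n × Fin n → ℝ) (hP₀nn : ∀ a, 0 ≤ P₀ a)
    {Ω : Type*} [MeasurableSpace Ω] (μ : Measure Ω) [IsProbabilityMeasure μ]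
    (e : ℕ → Ω → Fin n × Fin n) (hmeas : ∀ i, Measurable (e i))
    (hindep : ProbabilityTheory.iIndepFun e μ)
    (hlaw : ∀ i a, μ {ω | e i ω = a} = ENNReal.ofReal (P₀ a)) (a : Fin n × Fin n) :
    ∀ᵐ ω ∂μ, Tendsto (fun x : ℕ =>
        (x:ℝ)⁻¹ * ∑ i ∈ Finset.range x, (if e i ω = a then (1:ℝ) else 0))
      atTop (𝓝 (P₀ a)) := by
  classical
  set φ : Fin n × Fin n → ℝ := fun p => if p = a then (1:ℝ) else 0 with hφdef
  have hφ : Measurable φ := Measurable.ite (measurableSet_eq) measurable_const measurable_const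
  set X : ℕ → Ω → ℝ := fun i ω => if e i ω = a then (1:ℝ) else 0 with hXdef
  have hXeq : ∀ i, X i = φ ∘ e i := fun i => rfl
  have hs : ∀ i, MeasurableSet {ω | e i ω = a} := fun i => (hmeas i) (measurableSet_singleton a)
  have hX0 : X 0 = Set.indicator {ω | e 0 ω = a} (fun _ => (1:ℝ)) := by
    funext ω; simp [Set.indicator_apply, hXdef]
  have hint : Integrable (X 0) μ := by
    rw [hX0]; exact (integrable_const (1:ℝ)).indicator (hs 0)
  have hident_e : ∀ i, ProbabilityTheory.IdentDistrib (e i) (e 0) μ μ := by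
    intro i
    refine ⟨(hmeas i).aemeasurable, (hmeas 0).aemeasurable, ?_⟩
    refine MeasureTheory.Measure.ext_of_singleton fun b => ?_
    rw [Measure.map_apply (hmeas i) (measurableSet_singleton b),
      Measure.map_apply (hmeas 0) (measurableSet_singleton b)]
    have h1 : e i ⁻¹' {b} = {ω | e i ω = b} := rfl
    have h2 : e 0 ⁻¹' {b} = {ω | e 0 ω = b} := rfl
    rw [h1, h2, hlaw i b, hlaw 0 b]
  have hindep' : Pairwise (Function.onFun (fun f g => ProbabilityTheory.IndepFun f g μ) X) := by
    intro i j hij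
    simp only [Function.onFun, hXeq]
    exact (hindep.indepFun hij).comp hφ hφ
  have hident : ∀ i, ProbabilityTheory.IdentDistrib (X i) (X 0) μ μ := by
    intro i
    rw [hXeq i, hXeq 0]
    exact (hident_e i).comp hφ
  have hexp : ∫ ω, X 0 ω ∂μ = P₀ a := by
    rw [hX0]
    rw [MeasureTheory.integral_indicator_const (1:ℝ) (hs 0)]
    rw [measureReal_def, hlaw 0 a, smul_eq_mul, mul_one, ENNReal.toReal_ofReal (hP₀nn a)]
  have := ProbabilityTheory.strong_law_ae X hint hindep' hident
  filter_upwards [this] with ω hω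
  rw [hexp] at hω
  simpa [smul_eq_mul, hXdef] using hω

theorem stmt11 {n : ℕ} (hn : 1 ≤ n)
    (P₀ : Fin n × Fin n → ℝ) (hP₀ : IsEdgeDist P₀)
    (c : ℝ) (hc : 0 < c)
    {Ω : Type*} [MeasurableSpace Ω] (μ : Measure Ω) [IsProbabilityMeasure μ]
    (e : ℕ → Ω → Fin n × Fin n) (hmeas : ∀ i, Measurable (e i))
    (hindep : ProbabilityTheory.iIndepFun e μ)
    (hlaw : ∀ i a, μ {ω | e i ω = a} = ENNReal.ofReal (P₀ a)) :
    ∀ ε > 0,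
      Tendsto (fun x : ℕ => μ {ω |
          ε ≤ ⨆ Q : {Q : Fin n × Fin n → ℝ // IsEdgeDist Q ∧ ∀ a, c ≤ Q a},
              |(1 / (x : ℝ)) *
                  ((-∑ i ∈ Finset.range x, Real.logb 2 ((Q : Fin n × Fin n → ℝ) (e i ω)))
                    + ∑ a : Fin n × Fin n,
                        (Q : Fin n × Fin n → ℝ) a * Real.logb 2 ((Q : Fin n × Fin n → ℝ) a))
                - crossEnt P₀ (Q : Fin n × Fin n → ℝ)|})
        atTop (𝓝 0) := by
  classical
  intro ε hε
  set L : ℝ := |Real.logb 2 c| with hLdef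
  have hLnn : 0 ≤ L := abs_nonneg _
  set card : ℝ := (Fintype.card (Fin n × Fin n) : ℝ) with hcard
  set B : ℕ → Ω → ℝ := fun x ω =>
    (∑ a : Fin n × Fin n,
        |(x:ℝ)⁻¹ * (∑ i ∈ Finset.range x, (if e i ω = a then (1:ℝ) else 0)) - P₀ a|) * L
      + (x:ℝ)⁻¹ * (card * L) with hBdef
  -- B is nonnegative
  have hBnn : ∀ x ω, 0 ≤ B x ω := by
    intro x ω
    apply add_nonneg
    · exact mul_nonneg (Finset.sum_nonneg fun a _ => abs_nonneg _) hLnn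
    · exact mul_nonneg (inv_nonneg.2 (Nat.cast_nonneg x))
        (mul_nonneg (Nat.cast_nonneg _) hLnn)
  -- B is measurable
  have hBmeas : ∀ x, Measurable (B x) := by
    intro x
    apply Measurable.add
    · apply Measurable.mul_const
      apply Finset.measurable_sum
      intro a _
      apply Measurable.abs
      apply Measurable.sub _ measurable_const
      apply Measurable.const_mul
      apply Finset.measurable_sum
      intro i _
      exact Measurable.ite ((hmeas i) (measurableSet_singleton a))
        measurable_const measurable_const
    · exact measurable_const
  -- B tends to 0 almost everywhere
  have hB0 : ∀ᵐ ω ∂μ, Tendsto (fun x => B x ω) atTop (𝓝 0) := by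
    have hall := MeasureTheory.ae_all_iff.2
      (freq_tendsto P₀ (fun a => (hP₀.1 a).1) μ e hmeas hindep hlaw)
    filter_upwards [hall] with ω hω
    have h1 : Tendsto (fun x : ℕ => (∑ a : Fin n × Fin n,
        |(x:ℝ)⁻¹ * (∑ i ∈ Finset.range x, (if e i ω = a then (1:ℝ) else 0)) - P₀ a|) * L)
        atTop (𝓝 0) := by
      have h2 : Tendsto (fun x : ℕ => ∑ a : Fin n × Fin n,
          |(x:ℝ)⁻¹ * (∑ i ∈ Finset.range x, (if e i ω = a then (1:ℝ) else 0)) - P₀ a|)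
          atTop (𝓝 (∑ _a : Fin n × Fin n, (0:ℝ))) := by
        apply tendsto_finset_sum
        intro a _
        have := ((hω a).sub_const (P₀ a)).abs
        simpa using this
      have h3 := h2.mul_const L
      simpa using h3
    have h4 : Tendsto (fun x : ℕ => (x:ℝ)⁻¹ * (card * L)) atTop (𝓝 0) := by
      have := (tendsto_inv_atTop_nhds_zero_nat (𝕜 := ℝ)).mul_const (card * L)
      simpa using this
    have := h1.add h4
    simpa [hBdef] using this
  -- convergence in measure
  have hTIM : MeasureTheory.TendstoInMeasure μ B atTop (fun _ => (0:ℝ)) :=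
    tendstoInMeasure_of_tendsto_ae (fun x => (hBmeas x).aestronglyMeasurable) hB0
  have hupper := hTIM (ENNReal.ofReal ε) (ENNReal.ofReal_pos.2 hε)
  -- conclude by squeezing
  refine tendsto_of_tendsto_of_tendsto_of_le_of_le' tendsto_const_nhds hupper
    (Eventually.of_forall fun x => zero_le) ?_
  filter_upwards [eventually_ge_atTop 1] with x hx
  apply measure_mono
  intro ω hω
  simp only [Set.mem_setOf_eq] at hω ⊢
  -- it suffices to bound the sup by B x ω
  have hc1 : c ≤ 1 := by
    rcases hω with _
    -- derive from any Q? we instead derive from existence of a distribution in the set,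
    -- but the set could be empty; handle by cases below
    by_contra h
    push_neg at h
    -- then the index type is empty and the sup is 0 < ε ≤ sup, contradiction
    have hempty : IsEmpty {Q : Fin n × Fin n → ℝ // IsEdgeDist Q ∧ ∀ a, c ≤ Q a} := by
      constructor
      rintro ⟨Q, hQ, hQc⟩
      have a0 : Fin n × Fin n := (⟨0, hn⟩, ⟨0, hn⟩)
      exact absurd ((hQc a0).trans (hQ.1 a0).2) (not_le.2 h)
    rw [iSup_of_empty', Real.sSup_empty] at hω
    linarith
  have hsup : (⨆ Q : {Q : Fin n × Fin n → ℝ // IsEdgeDist Q ∧ ∀ a, c ≤ Q a},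
      |(1 / (x : ℝ)) *
          ((-∑ i ∈ Finset.range x, Real.logb 2 ((Q : Fin n × Fin n → ℝ) (e i ω)))
            + ∑ a : Fin n × Fin n,
                (Q : Fin n × Fin n → ℝ) a * Real.logb 2 ((Q : Fin n × Fin n → ℝ) a))
        - crossEnt P₀ (Q : Fin n × Fin n → ℝ)|) ≤ B x ω := by
    refine Real.iSup_le (fun Q => ?_) (hBnn x ω)
    exact key_bound P₀ Q.1 c hc hc1 Q.2.1 Q.2.2 x (fun i => e i ω)
  have : ε ≤ B x ω := le_trans hω hsup
  rw [edist_dist]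
  apply ENNReal.ofReal_le_ofReal
  calc ε ≤ B x ω := this
    _ ≤ |B x ω| := le_abs_self _
    _ = dist (B x ω) 0 := by rw [Real.dist_eq, sub_zero]
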